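/- Let G be a connected self-contained graph whose foundation is empty (every vertex of G lies in some removable subgraph). Then G contains a ray, i.e., a one-way infinite path as a subgraph. -/

import Mathlib

open SimpleGraph Function Set

/-- `s` is the vertex set of a removable subgraph of `G`: it is nonempty, proper,
and deleting it yields a graph isomorphic to `G`. -/
def IsRemovable {V : Type*} (G : SimpleGraph V) (s : Set V) : Prop :=
  s.Nonempty ∧ s ≠ Set.univ ∧ Nonempty (G ≃g (G.induce sᶜ))

/-- `G` is self-contained: isomorphic to a proper induced subgraph of itself. -/
def SelfContained {V : Type*} (G : SimpleGraph V) : Prop :=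
  ∃ t : Set V, t ≠ Set.univ ∧ Nonempty (G ≃g G.induce t)

/-- The vertex set of the foundation of `G`: vertices in no removable subgraph. -/
def FndSet {V : Type*} (G : SimpleGraph V) : Set V :=
  {v | ∀ s : Set V, IsRemovable G s → v ∉ s}

/-- The set of twisted vertices for a removable vertex set `h`. -/
def TorSet {V : Type*} (G : SimpleGraph V) (h : Set V) : Set V :=
  {v | (∃ s, IsRemovable G s ∧ v ∈ s) ∧
    ∃ hv : v ∈ hᶜ, (⟨v, hv⟩ : ↥hᶜ) ∈ FndSet (G.induce hᶜ)}

section Reach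

variable {W : Type*} (H : SimpleGraph W)

/-- Reachability within a set of vertices. -/
inductive ReachIn (A : Set W) (v : W) : W → Prop
  | refl (hv : v ∈ A) : ReachIn A v v
  | tail {w x : W} (h : ReachIn A v w) (ha : H.Adj w x) (hx : x ∈ A) : ReachIn A v x

/-- The connected component of `v` within `A`. -/
def ccIn (A : Set W) (v : W) : Set W := {w | ReachIn H A v w}

variable {H}

lemma ReachIn.mem_left {A : Set W} {v w : W} (h : ReachIn H A v w) : v ∈ A := by
  induction h with
  | refl hv => exact hv
  | tail h ha hx ih => exact ih

lemma ReachIn.mem_right {A : Set W} {v w : W} (h : ReachIn H A v w) : w ∈ A := by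
  induction h with
  | refl hv => exact hv
  | tail h ha hx ih => exact hx

lemma ReachIn.trans {A : Set W} {v w x : W} (h : ReachIn H A v w)
    (h' : ReachIn H A w x) : ReachIn H A v x := by
  induction h' with
  | refl hv => exact h
  | tail h' ha hx ih => exact ih.tail ha hx

lemma ReachIn.symm {A : Set W} {v w : W} (h : ReachIn H A v w) : ReachIn H A w v := by
  induction h with
  | refl hv => exact .refl hv
  | @tail w' x h ha hx ih =>
      exact ReachIn.trans (.tail (.refl hx) ha.symm h.mem_right) ih

lemma ccIn_eq_of_mem {A : Set W} {v w : W} (h : ReachIn H A v w) :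
    ccIn H A v = ccIn H A w := by
  ext x
  exact ⟨fun hx => h.symm.trans hx, fun hx => h.trans hx⟩

lemma ccIn_subset (A : Set W) (v : W) : ccIn H A v ⊆ A := fun _ hx => hx.mem_right

lemma mem_ccIn_self {A : Set W} {v : W} (hv : v ∈ A) : v ∈ ccIn H A v := .refl hv

variable (H) in
/-- Schmidt-style rayless rank predicate for the vertex set `A` in `H`. -/
inductive RankedOn : Set W → Prop
  | mk (A S : Set W) (hfin : S.Finite)
      (h : ∀ v ∈ A \ S, RankedOn (ccIn H (A \ S) v)) : RankedOn A

lemma rankedOn_empty : RankedOn H (∅ : Set W) :=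
  .mk ∅ ∅ finite_empty (by simp)

lemma not_rankedOn_mem {A : Set W} {v : W} (h : ¬ RankedOn H (ccIn H A v)) : v ∈ A := by
  by_contra hv
  have : ccIn H A v = ∅ := by
    ext w
    simp only [mem_empty_iff_false, iff_false]
    exact fun hw => hv hw.mem_left
  rw [this] at h
  exact h rankedOn_empty

lemma exists_adj_reachIn {A : Set W} {v w : W} (h : ReachIn H A v w) (hne : w ≠ v) :
    ∃ v', H.Adj v v' ∧ ReachIn H (ccIn H A v \ {v}) v' w := by
  induction h with
  | refl hv => exact absurd rfl hne
  | @tail w' x h ha hx ih =>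
      by_cases hw' : w' = v
      · subst hw'
        exact ⟨x, ha, .refl ⟨h.tail ha hx, hne⟩⟩
      · obtain ⟨v', hadj, hr⟩ := ih hw'
        exact ⟨v', hadj, hr.tail ha ⟨h.tail ha hx, hne⟩⟩

lemma step_lemma {A : Set W} {v : W} (hnr : ¬ RankedOn H (ccIn H A v)) :
    ∃ v', H.Adj v v' ∧ ¬ RankedOn H (ccIn H (ccIn H A v \ {v}) v') := by
  have hvA : v ∈ A := not_rankedOn_mem hnr
  have h1 : ¬ ∀ w ∈ ccIn H A v \ {v}, RankedOn H (ccIn H (ccIn H A v \ {v}) w) := by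
    intro h
    exact hnr (.mk _ {v} (finite_singleton v) h)
  push_neg at h1
  obtain ⟨w, hw, hnr'⟩ := h1
  obtain ⟨v', hadj, hr⟩ := exists_adj_reachIn hw.1 (by simpa using hw.2)
  refine ⟨v', hadj, ?_⟩
  rwa [ccIn_eq_of_mem hr]

lemma reachIn_of_walk {V : Type*} {G : SimpleGraph V} (g : G ↪g H) {B : Set W}
    (hg : ∀ x, g x ∈ B) {a b : V} (p : G.Walk a b) : ReachIn H B (g a) (g b) := by
  induction p with
  | nil => exact .refl (hg _)
  | @cons a c b ha p ih =>
      exact ReachIn.trans (.tail (.refl (hg a)) (g.map_rel_iff.mpr ha) (hg c)) ih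

/-- From an unranked connected graph, extract a ray. -/
lemma ray_of_not_rankedOn (hconn : H.Connected) (hnr : ¬ RankedOn H (Set.univ : Set W)) :
    ∃ f : ℕ → W, Function.Injective f ∧ ∀ n, H.Adj (f n) (f (n + 1)) := by
  classical
  have : Nonempty W := hconn.nonempty
  obtain ⟨v0⟩ := this
  have hcc : ccIn H (Set.univ : Set W) v0 = Set.univ := by
    apply eq_univ_of_forall
    intro w
    obtain ⟨p⟩ := hconn.preconnected v0 w
    have := reachIn_of_walk (Embedding.refl : H ↪g H) (fun x => mem_univ x) p
    simpa [ccIn] using this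
  have hnr0 : ¬ RankedOn H (ccIn H (Set.univ : Set W) v0) := by rwa [hcc]
  -- states
  let St := {p : Set W × W // ¬ RankedOn H (ccIn H p.1 p.2)}
  have hstep : ∀ s : St, ∃ v', H.Adj s.1.2 v' ∧
      ¬ RankedOn H (ccIn H (ccIn H s.1.1 s.1.2 \ {s.1.2}) v') := fun s => step_lemma s.2
  choose nextv hadj hnr' using hstep
  let next : St → St := fun s => ⟨(ccIn H s.1.1 s.1.2 \ {s.1.2}, nextv s), hnr' s⟩
  let st : ℕ → St := fun n => next^[n] ⟨(Set.univ, v0), hnr0⟩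
  have hst_succ : ∀ n, st (n + 1) = next (st n) := by
    intro n
    simp only [st, Function.iterate_succ_apply']
  refine ⟨fun n => (st n).1.2, ?_, ?_⟩
  · -- injectivity
    have hmem : ∀ n, (st n).1.2 ∈ (st n).1.1 := fun n => not_rankedOn_mem (st n).2
    have hsub1 : ∀ n, (st (n + 1)).1.1 ⊆ (st n).1.1 \ {(st n).1.2} := by
      intro n
      rw [hst_succ n]
      intro x hx
      exact ⟨(ccIn_subset _ _ hx.1 : x ∈ (st n).1.1), hx.2⟩
    have hchain' : ∀ m k, (st (m + k + 1)).1.1 ⊆ (st m).1.1 \ {(st m).1.2} := by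
      intro m k
      induction k with
      | zero => exact hsub1 m
      | succ k ih => exact fun x hx => ih ((hsub1 (m + k + 1) hx).1)
    have hchain : ∀ m n, m < n → (st n).1.1 ⊆ (st m).1.1 \ {(st m).1.2} := by
      intro m n hmn
      obtain ⟨k, rfl⟩ : ∃ k, n = m + k + 1 := ⟨n - m - 1, by omega⟩
      exact hchain' m k
    have key : ∀ m n, m < n → (st n).1.2 ≠ (st m).1.2 := by
      intro m n hmn heq
      have := hchain m n hmn (hmem n)
      rw [heq] at this
      exact this.2 rfl
    intro m n h
    by_contra hne
    rcases Nat.lt_or_ge m n with h' | h'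
    · exact key m n h' h.symm
    · exact key n m (lt_of_le_of_ne h' (Ne.symm hne)) h
  · intro n
    show H.Adj ((st n).1.2) ((st (n + 1)).1.2)
    rw [hst_succ n]
    exact hadj (st n)

end Reach

section Transfer

variable {V W : Type*} {G : SimpleGraph V} {H : SimpleGraph W}

/-- Congruence isomorphism for equal vertex sets. -/
def induceCongr (G : SimpleGraph V) {A B : Set V} (h : A = B) : G.induce A ≃g G.induce B where
  toEquiv := Equiv.setCongr h
  map_rel_iff' := by intro a b; simp

/-- Transport an induced subgraph along a graph isomorphism. -/
def isoInduce (e : G ≃g H) (A : Set V) : G.induce A ≃g H.induce (⇑e '' A) where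
  toEquiv := e.toEquiv.image A
  map_rel_iff' := by
    intro a b
    simp only [Equiv.image, Equiv.coe_fn_mk, comap_adj, Function.Embedding.coe_subtype]
    exact e.map_adj_iff

/-- Collapse a doubly-induced subgraph. -/
noncomputable def induceInduce (G : SimpleGraph V) (A : Set V) (B : Set ↥A) :
    (G.induce A).induce B ≃g G.induce (Subtype.val '' B) where
  toEquiv := Equiv.Set.image Subtype.val B Subtype.val_injective
  map_rel_iff' := by
    intro a b
    simp only [Equiv.Set.image, Equiv.Set.imageOfInjOn, Equiv.coe_fn_mk, comap_adj,
      Function.Embedding.coe_subtype]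

lemma IsRemovable.map (e : G ≃g H) {s : Set V} (h : IsRemovable G s) :
    IsRemovable H (⇑e '' s) := by
  obtain ⟨hne, hproper, ⟨ι⟩⟩ := h
  refine ⟨hne.image _, ?_, ?_⟩
  · obtain ⟨v, hv⟩ := (Set.ne_univ_iff_exists_notMem s).mp hproper
    refine (Set.ne_univ_iff_exists_notMem _).mpr ⟨e v, ?_⟩
    intro ⟨u, hu, heq⟩
    exact hv (e.injective heq ▸ hu)
  · have himg : ⇑e '' sᶜ = (⇑e '' s)ᶜ := Set.image_compl_eq e.bijective
    exact ⟨(e.symm.trans ι).trans ((isoInduce e sᶜ).trans (induceCongr H himg))⟩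

lemma fnd_empty_map (e : G ≃g H) (hf : ∀ v : V, ∃ s, IsRemovable G s ∧ v ∈ s) :
    ∀ w : W, ∃ s, IsRemovable H s ∧ w ∈ s := by
  intro w
  obtain ⟨s, hs, hv⟩ := hf (e.symm w)
  exact ⟨⇑e '' s, hs.map e, ⟨e.symm w, hv, e.apply_symm_apply w⟩⟩

lemma isRemovable_union {s : Set V} (hs : IsRemovable G s) {s' : Set ↥sᶜ}
    (hs' : IsRemovable (G.induce sᶜ) s') :
    IsRemovable G (s ∪ Subtype.val '' s') := by
  obtain ⟨hne, hproper, ⟨ι⟩⟩ := hs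
  obtain ⟨hne', hproper', ⟨ι'⟩⟩ := hs'
  refine ⟨hne.mono subset_union_left, ?_, ?_⟩
  · obtain ⟨y, hy⟩ := (Set.ne_univ_iff_exists_notMem s').mp hproper'
    refine (Set.ne_univ_iff_exists_notMem _).mpr ⟨y.1, ?_⟩
    rintro (h | ⟨z, hz, hzy⟩)
    · exact y.2 h
    · exact hy (Subtype.val_injective hzy ▸ hz)
  · have himg : Subtype.val '' (s'ᶜ : Set ↥sᶜ) = (s ∪ Subtype.val '' s')ᶜ := by
      ext x
      constructor
      · rintro ⟨y, hy, rfl⟩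
        rintro (h | ⟨z, hz, hzy⟩)
        · exact y.2 h
        · exact hy (Subtype.val_injective hzy ▸ hz)
      · intro hx
        have hxs : x ∈ sᶜ := fun h => hx (Or.inl h)
        exact ⟨⟨x, hxs⟩, fun h => hx (Or.inr ⟨⟨x, hxs⟩, h, rfl⟩), rfl⟩
    exact ⟨(ι.trans ι').trans ((induceInduce G sᶜ s'ᶜ).trans (induceCongr G himg))⟩

lemma exists_removable_superset :
    ∀ (n : ℕ) {V : Type*} (G : SimpleGraph V), Nonempty V →
      (∀ v : V, ∃ s, IsRemovable G s ∧ v ∈ s) →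
      ∀ F : Set V, F.Finite → F.ncard ≤ n → ∃ s, IsRemovable G s ∧ F ⊆ s := by
  intro n
  induction n with
  | zero =>
      intro V G hV hf F hF hcard
      obtain ⟨v⟩ := hV
      obtain ⟨s, hs, _⟩ := hf v
      have : F = ∅ := (Set.ncard_eq_zero hF).mp (Nat.le_zero.mp hcard)
      exact ⟨s, hs, this ▸ empty_subset s⟩
  | succ n ih =>
      intro V G hV hf F hF hcard
      rcases F.eq_empty_or_nonempty with rfl | ⟨v, hv⟩
      · obtain ⟨v⟩ := hV
        obtain ⟨s, hs, _⟩ := hf v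
        exact ⟨s, hs, empty_subset s⟩
      · obtain ⟨s1, hs1, hvs1⟩ := hf v
        obtain ⟨e⟩ := hs1.2.2
        have hV1 : Nonempty ↥s1ᶜ := by
          obtain ⟨u, hu⟩ := (Set.ne_univ_iff_exists_notMem s1).mp hs1.2.1
          exact ⟨u, hu⟩
        have hf1 := fnd_empty_map e hf
        set F' : Set ↥s1ᶜ := Subtype.val ⁻¹' F with hF'def
        have hF'fin : F'.Finite := hF.preimage (Subtype.val_injective.injOn)
        have hcard' : F'.ncard ≤ n := by
          have h1 : F'.ncard = (Subtype.val '' F').ncard :=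
            (Set.ncard_image_of_injective F' Subtype.val_injective).symm
          have h2 : Subtype.val '' F' ⊆ F \ {v} := by
            rintro x ⟨y, hy, rfl⟩
            exact ⟨hy, fun h => y.2 (h ▸ hvs1)⟩
          have h3 : (Subtype.val '' F').ncard ≤ (F \ {v}).ncard :=
            Set.ncard_le_ncard h2 hF.diff
          have h4 : (F \ {v}).ncard = F.ncard - 1 := Set.ncard_diff_singleton_of_mem hv
          omega
        obtain ⟨s', hs', hFs'⟩ := ih (G.induce s1ᶜ) hV1 hf1 F' hF'fin hcard'
        refine ⟨s1 ∪ Subtype.val '' s', isRemovable_union hs1 hs', ?_⟩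
        intro x hx
        by_cases hxs1 : x ∈ s1
        · exact Or.inl hxs1
        · exact Or.inr ⟨⟨x, hxs1⟩, hFs' hx, rfl⟩

end Transfer

theorem no_embed {W : Type*} {H : SimpleGraph W} {A : Set W} (hA : RankedOn H A) :
    ∀ {V : Type*} (G : SimpleGraph V), G.Connected →
      (∀ v : V, ∃ s, IsRemovable G s ∧ v ∈ s) →
      ∀ f : G ↪g H, ¬ (Set.range ⇑f ⊆ A) := by
  induction hA with
  | @mk A S hfin h IH =>
    intro V G hconn hf f hrange
    have hFfin : (⇑f ⁻¹' S).Finite := hfin.preimage f.injective.injOn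
    obtain ⟨s, hs, hFs⟩ :=
      exists_removable_superset (⇑f ⁻¹' S).ncard G hconn.nonempty hf _ hFfin le_rfl
    obtain ⟨ψ⟩ := hs.2.2
    let g : G ↪g H := f.comp ((SimpleGraph.Embedding.induce sᶜ).comp ψ.toEmbedding)
    have hgx : ∀ x, g x = f ↑(ψ x) := fun x => rfl
    have hg : ∀ x, g x ∈ A \ S := by
      intro x
      rw [hgx]
      refine ⟨hrange ⟨_, rfl⟩, fun hS => (ψ x).2 (hFs hS)⟩
    have hV : Nonempty V := hconn.nonempty
    obtain ⟨x0⟩ := hV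
    have hreach : ∀ x, g x ∈ ccIn H (A \ S) (g x0) := by
      intro x
      obtain ⟨p⟩ := hconn.preconnected x0 x
      exact reachIn_of_walk g hg p
    exact IH (g x0) (hg x0) G hconn hf g (by rintro _ ⟨x, rfl⟩; exact hreach x)

theorem stmt5 {V : Type*} (G : SimpleGraph V) (hG : SelfContained G)
    (hc : G.Connected) (hf : FndSet G = ∅) :
    ∃ f : ℕ → V, Function.Injective f ∧ ∀ n, G.Adj (f n) (f (n + 1)) := by
  have hf' : ∀ v : V, ∃ s, IsRemovable G s ∧ v ∈ s := by
    intro v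
    have hv : v ∉ FndSet G := by rw [hf]; exact notMem_empty v
    simp only [FndSet, mem_setOf_eq, not_forall] at hv
    obtain ⟨s, hs, hvs⟩ := hv
    exact ⟨s, hs, not_not.mp hvs⟩
  by_cases hR : RankedOn G Set.univ
  · exact absurd (Set.subset_univ _)
      (no_embed hR G hc hf' (SimpleGraph.Embedding.refl : G ↪g G))
  · exact ray_of_not_rankedOn hc hR
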